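/- A minimizer ψ̃ of the constrained variational problem −λ² = inf_{ψ∈A} E(ψ) satisfies the weak Euler–Lagrange equation: for all ψ ∈ H²(ℝ), sμ ∫_ℝ [4|ξ|² ψ̃'ψ' + (|ξ|²ψ̃ + ψ̃'')(|ξ|²ψ + ψ'')] dx + (Mξ₁)² ∫_ℝ (|ξ|²ψ̃ψ + ψ̃'ψ') dx = g|ξ|² ∫_ℝ ρ̄' ψ̃ψ dx − λ² ∫_ℝ ρ̄(|ξ|²ψ̃ψ + ψ̃'ψ') dx. -/

import Mathlib

open MeasureTheory

/-- `ψ ∈ H¹(ℝ)` with weak derivative `ψ'`. -/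
def IsH1 (ψ ψ' : ℝ → ℝ) : Prop :=
  MemLp ψ 2 volume ∧ MemLp ψ' 2 volume ∧
    ∀ x : ℝ, ψ x = ψ 0 + ∫ t in (0:ℝ)..x, ψ' t

/-- `ψ ∈ H²(ℝ)` with first and second weak derivatives `ψ'`, `ψ''`. -/
def IsH2 (ψ ψ' ψ'' : ℝ → ℝ) : Prop :=
  IsH1 ψ ψ' ∧ IsH1 ψ' ψ''

/-- `E₀(ψ) = ∫ [M²ξ₁²(ψ² + |ψ'|²/|ξ|²) − g ρ̄' ψ²]` (horizontal case). -/
noncomputable def E0 (g M ξ1 ξ2 : ℝ) (ρ' ψ ψ' : ℝ → ℝ) : ℝ :=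
  ∫ x, (M ^ 2 * ξ1 ^ 2 * ((ψ x) ^ 2 + (ψ' x) ^ 2 / (ξ1 ^ 2 + ξ2 ^ 2))
    - g * ρ' x * (ψ x) ^ 2)

/-- `E₁(ψ) = μ ∫ (4|ξ|²|ψ'|² + ||ξ|²ψ + ψ''|²)`. -/
noncomputable def E1 (μ ξ1 ξ2 : ℝ) (ψ ψ' ψ'' : ℝ → ℝ) : ℝ :=
  μ * ∫ x, (4 * (ξ1 ^ 2 + ξ2 ^ 2) * (ψ' x) ^ 2
    + ((ξ1 ^ 2 + ξ2 ^ 2) * ψ x + ψ'' x) ^ 2)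

/-- `E(ψ, s) = |ξ|² E₀(ψ) + s E₁(ψ)`. -/
noncomputable def Efun (g μ s M ξ1 ξ2 : ℝ) (ρ' ψ ψ' ψ'' : ℝ → ℝ) : ℝ :=
  (ξ1 ^ 2 + ξ2 ^ 2) * E0 g M ξ1 ξ2 ρ' ψ ψ' + s * E1 μ ξ1 ξ2 ψ ψ' ψ''

/-- `J(ψ) = ∫ ρ̄ (|ξ|²ψ² + |ψ'|²)`. -/
noncomputable def Jfun (ξ1 ξ2 : ℝ) (ρb ψ ψ' : ℝ → ℝ) : ℝ :=
  ∫ x, ρb x * ((ξ1 ^ 2 + ξ2 ^ 2) * (ψ x) ^ 2 + (ψ' x) ^ 2)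

/-- The admissible set `A = {ψ ∈ H²(ℝ) : J(ψ) = 1}` (with the natural integrability
requirements on the integrands appearing in `E` and `J`). -/
def MemA (ξ1 ξ2 : ℝ) (ρb ρ' ψ ψ' ψ'' : ℝ → ℝ) : Prop :=
  IsH2 ψ ψ' ψ'' ∧
    Integrable (fun x => ρ' x * (ψ x) ^ 2) ∧
    Integrable (fun x => ρb x * ((ξ1 ^ 2 + ξ2 ^ 2) * (ψ x) ^ 2 + (ψ' x) ^ 2)) ∧
    Integrable (fun x => ((ξ1 ^ 2 + ξ2 ^ 2) * ψ x + ψ'' x) ^ 2) ∧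
    Jfun ξ1 ξ2 ρb ψ ψ' = 1

set_option maxHeartbeats 2000000

lemma L2mul {f h : ℝ → ℝ} (hf : MemLp f 2 (volume : Measure ℝ))
    (hh : MemLp h 2 (volume : Measure ℝ)) :
    Integrable (fun x => f x * h x) (volume : Measure ℝ) := by
  have h1 : (1 : ENNReal) / 1 = 1 / 2 + 1 / 2 := by rw [ENNReal.add_halves]; simp
  have := hh.smul (r := 1) hf
  rw [memLp_one_iff_integrable] at this
  exact this.congr (Filter.Eventually.of_forall fun x => rfl)

lemma intE0 {g M ξ1 ξ2 C : ℝ} {ρ' f f' h h' : ℝ → ℝ}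
    (hρ'm : AEStronglyMeasurable ρ' (volume : Measure ℝ)) (hρ'bd : ∀ x, ‖ρ' x‖ ≤ C)
    (hf : MemLp f 2 (volume : Measure ℝ)) (hf' : MemLp f' 2 (volume : Measure ℝ))
    (hh : MemLp h 2 (volume : Measure ℝ)) (hh' : MemLp h' 2 (volume : Measure ℝ)) :
    Integrable (fun x => M ^ 2 * ξ1 ^ 2 * (f x * h x + f' x * h' x / (ξ1 ^ 2 + ξ2 ^ 2))
      - g * ρ' x * (f x * h x)) (volume : Measure ℝ) := by
  have h1 : Integrable (fun x => f x * h x) (volume : Measure ℝ) := L2mul hf hh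
  have h2 : Integrable (fun x => f' x * h' x) (volume : Measure ℝ) := L2mul hf' hh'
  have h3 : Integrable (fun x => ρ' x * (f x * h x)) (volume : Measure ℝ) :=
    h1.bdd_mul hρ'm (Filter.Eventually.of_forall hρ'bd)
  have h4 := ((h1.const_mul (M ^ 2 * ξ1 ^ 2)).add
      (h2.const_mul (M ^ 2 * ξ1 ^ 2 / (ξ1 ^ 2 + ξ2 ^ 2)))).sub (h3.const_mul g)
  exact h4.congr (Filter.Eventually.of_forall fun x => by
    simp only [Pi.add_apply, Pi.sub_apply]; ring)

lemma intE1 {ξ1 ξ2 : ℝ} {f f' f'' h h' h'' : ℝ → ℝ}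
    (hf : MemLp f 2 (volume : Measure ℝ)) (hf' : MemLp f' 2 (volume : Measure ℝ))
    (hf'' : MemLp f'' 2 (volume : Measure ℝ))
    (hh : MemLp h 2 (volume : Measure ℝ)) (hh' : MemLp h' 2 (volume : Measure ℝ))
    (hh'' : MemLp h'' 2 (volume : Measure ℝ)) :
    Integrable (fun x => 4 * (ξ1 ^ 2 + ξ2 ^ 2) * (f' x * h' x)
      + ((ξ1 ^ 2 + ξ2 ^ 2) * f x + f'' x) * ((ξ1 ^ 2 + ξ2 ^ 2) * h x + h'' x))
      (volume : Measure ℝ) := by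
  have hq1 : MemLp (fun x => (ξ1 ^ 2 + ξ2 ^ 2) * f x + f'' x) 2 (volume : Measure ℝ) :=
    (hf.const_mul _).add hf''
  have hq2 : MemLp (fun x => (ξ1 ^ 2 + ξ2 ^ 2) * h x + h'' x) 2 (volume : Measure ℝ) :=
    (hh.const_mul _).add hh''
  exact (((L2mul hf' hh').const_mul (4 * (ξ1 ^ 2 + ξ2 ^ 2))).add (L2mul hq1 hq2)).congr
    (Filter.Eventually.of_forall fun x => by simp only [Pi.add_apply]; try ring)

lemma intJ {ξ1 ξ2 R : ℝ} {ρb f f' h h' : ℝ → ℝ}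
    (hρbm : AEStronglyMeasurable ρb (volume : Measure ℝ)) (hρbbd : ∀ x, ‖ρb x‖ ≤ R)
    (hf : MemLp f 2 (volume : Measure ℝ)) (hf' : MemLp f' 2 (volume : Measure ℝ))
    (hh : MemLp h 2 (volume : Measure ℝ)) (hh' : MemLp h' 2 (volume : Measure ℝ)) :
    Integrable (fun x => ρb x * ((ξ1 ^ 2 + ξ2 ^ 2) * (f x * h x) + f' x * h' x))
      (volume : Measure ℝ) := by
  have h1 : Integrable (fun x => (ξ1 ^ 2 + ξ2 ^ 2) * (f x * h x) + f' x * h' x)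
      (volume : Measure ℝ) :=
    (((L2mul hf hh).const_mul (ξ1 ^ 2 + ξ2 ^ 2)).add (L2mul hf' hh')).congr
      (Filter.Eventually.of_forall fun x => by simp only [Pi.add_apply])
  exact h1.bdd_mul hρbm (Filter.Eventually.of_forall hρbbd)


lemma E0_smul (g M ξ1 ξ2 c : ℝ) (ρ' f f' : ℝ → ℝ) :
    E0 g M ξ1 ξ2 ρ' (fun x => c * f x) (fun x => c * f' x) = c ^ 2 * E0 g M ξ1 ξ2 ρ' f f' := by
  unfold E0
  rw [← integral_const_mul]
  exact integral_congr_ae (Filter.Eventually.of_forall fun x => by ring)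

lemma E1_smul (μ ξ1 ξ2 c : ℝ) (f f' f'' : ℝ → ℝ) :
    E1 μ ξ1 ξ2 (fun x => c * f x) (fun x => c * f' x) (fun x => c * f'' x)
      = c ^ 2 * E1 μ ξ1 ξ2 f f' f'' := by
  unfold E1
  have h : (∫ x, (4 * (ξ1 ^ 2 + ξ2 ^ 2) * (c * f' x) ^ 2
      + ((ξ1 ^ 2 + ξ2 ^ 2) * (c * f x) + c * f'' x) ^ 2))
      = c ^ 2 * ∫ x, (4 * (ξ1 ^ 2 + ξ2 ^ 2) * (f' x) ^ 2
      + ((ξ1 ^ 2 + ξ2 ^ 2) * f x + f'' x) ^ 2) := by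
    rw [← integral_const_mul]
    exact integral_congr_ae (Filter.Eventually.of_forall fun x => by ring)
  rw [h]; ring

lemma Jfun_smul (ξ1 ξ2 c : ℝ) (ρb f f' : ℝ → ℝ) :
    Jfun ξ1 ξ2 ρb (fun x => c * f x) (fun x => c * f' x) = c ^ 2 * Jfun ξ1 ξ2 ρb f f' := by
  unfold Jfun
  rw [← integral_const_mul]
  exact integral_congr_ae (Filter.Eventually.of_forall fun x => by ring)

lemma Efun_smul (g μ s M ξ1 ξ2 c : ℝ) (ρ' f f' f'' : ℝ → ℝ) :
    Efun g μ s M ξ1 ξ2 ρ' (fun x => c * f x) (fun x => c * f' x) (fun x => c * f'' x)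
      = c ^ 2 * Efun g μ s M ξ1 ξ2 ρ' f f' f'' := by
  unfold Efun
  rw [E0_smul, E1_smul]; ring

lemma L2interval {f : ℝ → ℝ} (hf : MemLp f 2 (volume : Measure ℝ)) (a b : ℝ) :
    IntervalIntegrable f volume a b := by
  rw [intervalIntegrable_iff]
  haveI : IsFiniteMeasure ((volume : Measure ℝ).restrict (Set.uIoc a b)) := by
    constructor
    rw [Measure.restrict_apply_univ]
    exact measure_Ioc_lt_top
  exact (hf.restrict (Set.uIoc a b)).integrable one_le_two

lemma IsH1.comb {f f' h h' : ℝ → ℝ} (hf : IsH1 f f') (hh : IsH1 h h') (a b : ℝ) :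
    IsH1 (fun x => a * f x + b * h x) (fun x => a * f' x + b * h' x) := by
  obtain ⟨hf2, hf'2, hfF⟩ := hf
  obtain ⟨hh2, hh'2, hhF⟩ := hh
  refine ⟨(hf2.const_mul a).add (hh2.const_mul b),
    (hf'2.const_mul a).add (hh'2.const_mul b), fun x => ?_⟩
  have key : (∫ t in (0:ℝ)..x, (a * f' t + b * h' t))
      = a * (∫ t in (0:ℝ)..x, f' t) + b * (∫ t in (0:ℝ)..x, h' t) := by
    rw [intervalIntegral.integral_add ((L2interval hf'2 0 x).const_mul a)
      ((L2interval hh'2 0 x).const_mul b), intervalIntegral.integral_const_mul,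
      intervalIntegral.integral_const_mul]
  simp only [key, hfF x, hhF x]
  ring

lemma IsH2.comb {f f' f'' h h' h'' : ℝ → ℝ} (hf : IsH2 f f' f'') (hh : IsH2 h h' h'') (a b : ℝ) :
    IsH2 (fun x => a * f x + b * h x) (fun x => a * f' x + b * h' x)
      (fun x => a * f'' x + b * h'' x) :=
  ⟨hf.1.comb hh.1 a b, hf.2.comb hh.2 a b⟩

lemma expand {F C G : ℝ → ℝ} (hF : Integrable F (volume : Measure ℝ))
    (hC : Integrable C (volume : Measure ℝ)) (hG : Integrable G (volume : Measure ℝ)) (τ : ℝ) :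
    ∫ x, (F x + 2 * τ * C x + τ ^ 2 * G x)
      = (∫ x, F x) + 2 * τ * (∫ x, C x) + τ ^ 2 * (∫ x, G x) := by
  have h1 : Integrable (fun x => F x + 2 * τ * C x) (volume : Measure ℝ) :=
    hF.add (hC.const_mul (2 * τ))
  rw [integral_add h1 (hG.const_mul (τ ^ 2)), integral_add hF (hC.const_mul (2 * τ)),
    integral_const_mul, integral_const_mul]



/-- A minimizer `ψ̃` of `E` on `A` with `E(ψ̃) = −λ²` satisfies the weak Euler–Lagrange
identity: for all `ψ ∈ H²(ℝ)`,
`sμ ∫ [4|ξ|²ψ̃'ψ' + (|ξ|²ψ̃+ψ̃'')(|ξ|²ψ+ψ'')] + (Mξ₁)² ∫ (|ξ|²ψ̃ψ + ψ̃'ψ')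
  = g|ξ|² ∫ ρ̄'ψ̃ψ − λ² ∫ ρ̄(|ξ|²ψ̃ψ + ψ̃'ψ')`. -/
theorem statement8 (g μ s M ξ1 ξ2 K R lam : ℝ) (hg : 0 < g) (hμ : 0 < μ) (hs : 0 < s)
    (hξ : ξ1 ^ 2 + ξ2 ^ 2 ≠ 0)
    (ρb ρ' : ℝ → ℝ) (hρmeas : Measurable ρb) (hρpos : ∀ x, 0 < ρb x)
    (hρbd : ∀ x, ρb x ≤ R)
    (hcont : Continuous ρ') (hsupp : HasCompactSupport ρ')
    (hK : ∀ x, |ρ' x| ≤ K * ρb x)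
    (ψt ψt' ψt'' : ℝ → ℝ) (hmem : MemA ξ1 ξ2 ρb ρ' ψt ψt' ψt'')
    (hmin : ∀ ψ ψ' ψ'' : ℝ → ℝ, MemA ξ1 ξ2 ρb ρ' ψ ψ' ψ'' →
      Efun g μ s M ξ1 ξ2 ρ' ψt ψt' ψt'' ≤ Efun g μ s M ξ1 ξ2 ρ' ψ ψ' ψ'')
    (hlam : Efun g μ s M ξ1 ξ2 ρ' ψt ψt' ψt'' = -lam ^ 2) :
    ∀ ψ ψ' ψ'' : ℝ → ℝ, IsH2 ψ ψ' ψ'' →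
      s * μ * (∫ x, (4 * (ξ1 ^ 2 + ξ2 ^ 2) * ψt' x * ψ' x +
          ((ξ1 ^ 2 + ξ2 ^ 2) * ψt x + ψt'' x) * ((ξ1 ^ 2 + ξ2 ^ 2) * ψ x + ψ'' x)))
        + (M * ξ1) ^ 2 * (∫ x, ((ξ1 ^ 2 + ξ2 ^ 2) * ψt x * ψ x + ψt' x * ψ' x))
      = g * (ξ1 ^ 2 + ξ2 ^ 2) * (∫ x, ρ' x * ψt x * ψ x)
        - lam ^ 2 * ∫ x, ρb x * ((ξ1 ^ 2 + ξ2 ^ 2) * ψt x * ψ x + ψt' x * ψ' x) := by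
  intro ψ ψ' ψ'' hH2
  obtain ⟨hH2t, -, -, -, hJt1⟩ := hmem
  have ht2 : MemLp ψt 2 (volume : Measure ℝ) := hH2t.1.1
  have ht'2 : MemLp ψt' 2 (volume : Measure ℝ) := hH2t.1.2.1
  have ht''2 : MemLp ψt'' 2 (volume : Measure ℝ) := hH2t.2.2.1
  have hs2 : MemLp ψ 2 (volume : Measure ℝ) := hH2.1.1
  have hs'2 : MemLp ψ' 2 (volume : Measure ℝ) := hH2.1.2.1
  have hs''2 : MemLp ψ'' 2 (volume : Measure ℝ) := hH2.2.2.1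
  have hρ'm : AEStronglyMeasurable ρ' (volume : Measure ℝ) := hcont.aestronglyMeasurable
  have hρbm : AEStronglyMeasurable ρb (volume : Measure ℝ) := hρmeas.aestronglyMeasurable
  have hR0 : 0 < R := lt_of_lt_of_le (hρpos 0) (hρbd 0)
  have hK0 : 0 ≤ K := by nlinarith [hK 0, abs_nonneg (ρ' 0), hρpos 0]
  have hρ'bd : ∀ x, ‖ρ' x‖ ≤ K * R := by
    intro x
    rw [Real.norm_eq_abs]
    calc |ρ' x| ≤ K * ρb x := hK x
    _ ≤ K * R := by nlinarith [hρbd x, hρpos x]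
  have hρbbd : ∀ x, ‖ρb x‖ ≤ R := fun x => by
    rw [Real.norm_eq_abs, abs_of_pos (hρpos x)]; exact hρbd x
  -- integrability of all cross/diagonal integrands
  have i0t := intE0 (g := g) (M := M) (ξ1 := ξ1) (ξ2 := ξ2) hρ'm hρ'bd ht2 ht'2 ht2 ht'2
  have i0c := intE0 (g := g) (M := M) (ξ1 := ξ1) (ξ2 := ξ2) hρ'm hρ'bd ht2 ht'2 hs2 hs'2
  have i0s := intE0 (g := g) (M := M) (ξ1 := ξ1) (ξ2 := ξ2) hρ'm hρ'bd hs2 hs'2 hs2 hs'2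
  have i1t := intE1 (ξ1 := ξ1) (ξ2 := ξ2) ht2 ht'2 ht''2 ht2 ht'2 ht''2
  have i1c := intE1 (ξ1 := ξ1) (ξ2 := ξ2) ht2 ht'2 ht''2 hs2 hs'2 hs''2
  have i1s := intE1 (ξ1 := ξ1) (ξ2 := ξ2) hs2 hs'2 hs''2 hs2 hs'2 hs''2
  have iJt := intJ (ξ1 := ξ1) (ξ2 := ξ2) hρbm hρbbd ht2 ht'2 ht2 ht'2
  have iJc := intJ (ξ1 := ξ1) (ξ2 := ξ2) hρbm hρbbd ht2 ht'2 hs2 hs'2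
  have iJs := intJ (ξ1 := ξ1) (ξ2 := ξ2) hρbm hρbbd hs2 hs'2 hs2 hs'2
  -- expansions in τ
  have hE0x : ∀ τ : ℝ, E0 g M ξ1 ξ2 ρ' (fun x => ψt x + τ * ψ x) (fun x => ψt' x + τ * ψ' x)
      = (∫ x, (M ^ 2 * ξ1 ^ 2 * (ψt x * ψt x + ψt' x * ψt' x / (ξ1 ^ 2 + ξ2 ^ 2)) - g * ρ' x * (ψt x * ψt x))) + 2 * τ * (∫ x, (M ^ 2 * ξ1 ^ 2 * (ψt x * ψ x + ψt' x * ψ' x / (ξ1 ^ 2 + ξ2 ^ 2)) - g * ρ' x * (ψt x * ψ x))) + τ ^ 2 * (∫ x, (M ^ 2 * ξ1 ^ 2 * (ψ x * ψ x + ψ' x * ψ' x / (ξ1 ^ 2 + ξ2 ^ 2)) - g * ρ' x * (ψ x * ψ x))) := by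
    intro τ
    have hpt : E0 g M ξ1 ξ2 ρ' (fun x => ψt x + τ * ψ x) (fun x => ψt' x + τ * ψ' x)
        = ∫ x, ((M ^ 2 * ξ1 ^ 2 * (ψt x * ψt x + ψt' x * ψt' x / (ξ1 ^ 2 + ξ2 ^ 2)) - g * ρ' x * (ψt x * ψt x)) + 2 * τ * (M ^ 2 * ξ1 ^ 2 * (ψt x * ψ x + ψt' x * ψ' x / (ξ1 ^ 2 + ξ2 ^ 2)) - g * ρ' x * (ψt x * ψ x)) + τ ^ 2 * (M ^ 2 * ξ1 ^ 2 * (ψ x * ψ x + ψ' x * ψ' x / (ξ1 ^ 2 + ξ2 ^ 2)) - g * ρ' x * (ψ x * ψ x))) :=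
      integral_congr_ae (Filter.Eventually.of_forall fun x => by ring)
    rw [hpt]
    exact expand i0t i0c i0s τ
  have hE1x : ∀ τ : ℝ, E1 μ ξ1 ξ2 (fun x => ψt x + τ * ψ x) (fun x => ψt' x + τ * ψ' x) (fun x => ψt'' x + τ * ψ'' x)
      = μ * ((∫ x, (4 * (ξ1 ^ 2 + ξ2 ^ 2) * (ψt' x * ψt' x) + ((ξ1 ^ 2 + ξ2 ^ 2) * ψt x + ψt'' x) * ((ξ1 ^ 2 + ξ2 ^ 2) * ψt x + ψt'' x))) + 2 * τ * (∫ x, (4 * (ξ1 ^ 2 + ξ2 ^ 2) * (ψt' x * ψ' x) + ((ξ1 ^ 2 + ξ2 ^ 2) * ψt x + ψt'' x) * ((ξ1 ^ 2 + ξ2 ^ 2) * ψ x + ψ'' x))) + τ ^ 2 * (∫ x, (4 * (ξ1 ^ 2 + ξ2 ^ 2) * (ψ' x * ψ' x) + ((ξ1 ^ 2 + ξ2 ^ 2) * ψ x + ψ'' x) * ((ξ1 ^ 2 + ξ2 ^ 2) * ψ x + ψ'' x)))) := by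
    intro τ
    have hpt : E1 μ ξ1 ξ2 (fun x => ψt x + τ * ψ x) (fun x => ψt' x + τ * ψ' x) (fun x => ψt'' x + τ * ψ'' x)
        = μ * ∫ x, ((4 * (ξ1 ^ 2 + ξ2 ^ 2) * (ψt' x * ψt' x) + ((ξ1 ^ 2 + ξ2 ^ 2) * ψt x + ψt'' x) * ((ξ1 ^ 2 + ξ2 ^ 2) * ψt x + ψt'' x)) + 2 * τ * (4 * (ξ1 ^ 2 + ξ2 ^ 2) * (ψt' x * ψ' x) + ((ξ1 ^ 2 + ξ2 ^ 2) * ψt x + ψt'' x) * ((ξ1 ^ 2 + ξ2 ^ 2) * ψ x + ψ'' x)) + τ ^ 2 * (4 * (ξ1 ^ 2 + ξ2 ^ 2) * (ψ' x * ψ' x) + ((ξ1 ^ 2 + ξ2 ^ 2) * ψ x + ψ'' x) * ((ξ1 ^ 2 + ξ2 ^ 2) * ψ x + ψ'' x))) := by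
      unfold E1
      exact congrArg (fun y => μ * y) (integral_congr_ae (Filter.Eventually.of_forall fun x => by ring))
    rw [hpt]
    exact congrArg (fun y => μ * y) (expand i1t i1c i1s τ)
  have hJx : ∀ τ : ℝ, Jfun ξ1 ξ2 ρb (fun x => ψt x + τ * ψ x) (fun x => ψt' x + τ * ψ' x)
      = (∫ x, (ρb x * ((ξ1 ^ 2 + ξ2 ^ 2) * (ψt x * ψt x) + ψt' x * ψt' x))) + 2 * τ * (∫ x, (ρb x * ((ξ1 ^ 2 + ξ2 ^ 2) * (ψt x * ψ x) + ψt' x * ψ' x))) + τ ^ 2 * (∫ x, (ρb x * ((ξ1 ^ 2 + ξ2 ^ 2) * (ψ x * ψ x) + ψ' x * ψ' x))) := by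
    intro τ
    have hpt : Jfun ξ1 ξ2 ρb (fun x => ψt x + τ * ψ x) (fun x => ψt' x + τ * ψ' x)
        = ∫ x, ((ρb x * ((ξ1 ^ 2 + ξ2 ^ 2) * (ψt x * ψt x) + ψt' x * ψt' x)) + 2 * τ * (ρb x * ((ξ1 ^ 2 + ξ2 ^ 2) * (ψt x * ψ x) + ψt' x * ψ' x)) + τ ^ 2 * (ρb x * ((ξ1 ^ 2 + ξ2 ^ 2) * (ψ x * ψ x) + ψ' x * ψ' x))) :=
      integral_congr_ae (Filter.Eventually.of_forall fun x => by ring)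
    rw [hpt]
    exact expand iJt iJc iJs τ
  -- values at ψt
  have hJT : (∫ x, (ρb x * ((ξ1 ^ 2 + ξ2 ^ 2) * (ψt x * ψt x) + ψt' x * ψt' x))) = 1 := by
    have e : Jfun ξ1 ξ2 ρb ψt ψt' = (∫ x, (ρb x * ((ξ1 ^ 2 + ξ2 ^ 2) * (ψt x * ψt x) + ψt' x * ψt' x))) :=
      integral_congr_ae (Filter.Eventually.of_forall fun x => by ring)
    rw [← e]; exact hJt1
  have hET : (ξ1 ^ 2 + ξ2 ^ 2) * (∫ x, (M ^ 2 * ξ1 ^ 2 * (ψt x * ψt x + ψt' x * ψt' x / (ξ1 ^ 2 + ξ2 ^ 2)) - g * ρ' x * (ψt x * ψt x))) + s * (μ * (∫ x, (4 * (ξ1 ^ 2 + ξ2 ^ 2) * (ψt' x * ψt' x) + ((ξ1 ^ 2 + ξ2 ^ 2) * ψt x + ψt'' x) * ((ξ1 ^ 2 + ξ2 ^ 2) * ψt x + ψt'' x)))) = -lam ^ 2 := by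
    have e0 : E0 g M ξ1 ξ2 ρ' ψt ψt' = (∫ x, (M ^ 2 * ξ1 ^ 2 * (ψt x * ψt x + ψt' x * ψt' x / (ξ1 ^ 2 + ξ2 ^ 2)) - g * ρ' x * (ψt x * ψt x))) :=
      integral_congr_ae (Filter.Eventually.of_forall fun x => by ring)
    have e1 : E1 μ ξ1 ξ2 ψt ψt' ψt'' = μ * (∫ x, (4 * (ξ1 ^ 2 + ξ2 ^ 2) * (ψt' x * ψt' x) + ((ξ1 ^ 2 + ξ2 ^ 2) * ψt x + ψt'' x) * ((ξ1 ^ 2 + ξ2 ^ 2) * ψt x + ψt'' x))) := by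
      unfold E1
      exact congrArg (fun y => μ * y) (integral_congr_ae (Filter.Eventually.of_forall fun x => by ring))
    have h := hlam
    unfold Efun at h
    rw [e0, e1] at h
    exact h
  obtain ⟨B, hBdef⟩ : ∃ B : ℝ,
      B = (ξ1 ^ 2 + ξ2 ^ 2) * (∫ x, (M ^ 2 * ξ1 ^ 2 * (ψt x * ψ x + ψt' x * ψ' x / (ξ1 ^ 2 + ξ2 ^ 2)) - g * ρ' x * (ψt x * ψ x))) + s * μ * (∫ x, (4 * (ξ1 ^ 2 + ξ2 ^ 2) * (ψt' x * ψ' x) + ((ξ1 ^ 2 + ξ2 ^ 2) * ψt x + ψt'' x) * ((ξ1 ^ 2 + ξ2 ^ 2) * ψ x + ψ'' x))) + lam ^ 2 * (∫ x, (ρb x * ((ξ1 ^ 2 + ξ2 ^ 2) * (ψt x * ψ x) + ψt' x * ψ' x))) := ⟨_, rfl⟩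
  obtain ⟨A2, hA2def⟩ : ∃ A2 : ℝ,
      A2 = (ξ1 ^ 2 + ξ2 ^ 2) * (∫ x, (M ^ 2 * ξ1 ^ 2 * (ψ x * ψ x + ψ' x * ψ' x / (ξ1 ^ 2 + ξ2 ^ 2)) - g * ρ' x * (ψ x * ψ x))) + s * μ * (∫ x, (4 * (ξ1 ^ 2 + ξ2 ^ 2) * (ψ' x * ψ' x) + ((ξ1 ^ 2 + ξ2 ^ 2) * ψ x + ψ'' x) * ((ξ1 ^ 2 + ξ2 ^ 2) * ψ x + ψ'' x))) + lam ^ 2 * (∫ x, (ρb x * ((ξ1 ^ 2 + ξ2 ^ 2) * (ψ x * ψ x) + ψ' x * ψ' x))) := ⟨_, rfl⟩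
  have hf : ∀ τ : ℝ, Efun g μ s M ξ1 ξ2 ρ' (fun x => ψt x + τ * ψ x) (fun x => ψt' x + τ * ψ' x) (fun x => ψt'' x + τ * ψ'' x)
      + lam ^ 2 * Jfun ξ1 ξ2 ρb (fun x => ψt x + τ * ψ x) (fun x => ψt' x + τ * ψ' x) = 2 * τ * B + τ ^ 2 * A2 := by
    intro τ
    unfold Efun
    rw [hE0x τ, hE1x τ, hJx τ, hBdef, hA2def]
    linear_combination hET + lam ^ 2 * hJT
  have hcombH2 : ∀ τ : ℝ, IsH2 (fun x => ψt x + τ * ψ x) (fun x => ψt' x + τ * ψ' x) (fun x => ψt'' x + τ * ψ'' x) := by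
    intro τ
    have h := IsH2.comb hH2t hH2 1 τ
    simpa only [one_mul] using h
  -- nonnegativity of the quadratic for admissible τ
  have hge : ∀ τ : ℝ, 0 < Jfun ξ1 ξ2 ρb (fun x => ψt x + τ * ψ x) (fun x => ψt' x + τ * ψ' x) → 0 ≤ 2 * τ * B + τ ^ 2 * A2 := by
    intro τ hjpos
    set c : ℝ := (Real.sqrt (Jfun ξ1 ξ2 ρb (fun x => ψt x + τ * ψ x) (fun x => ψt' x + τ * ψ' x)))⁻¹ with hcdef
    have hsq : Real.sqrt (Jfun ξ1 ξ2 ρb (fun x => ψt x + τ * ψ x) (fun x => ψt' x + τ * ψ' x)) ^ 2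
        = Jfun ξ1 ξ2 ρb (fun x => ψt x + τ * ψ x) (fun x => ψt' x + τ * ψ' x) := Real.sq_sqrt hjpos.le
    have hc2 : c ^ 2 * Jfun ξ1 ξ2 ρb (fun x => ψt x + τ * ψ x) (fun x => ψt' x + τ * ψ' x) = 1 := by
      rw [hcdef, inv_pow, hsq]
      exact inv_mul_cancel₀ hjpos.ne'
    have hsH2 : IsH2 (fun x => c * (ψt x + τ * ψ x)) (fun x => c * (ψt' x + τ * ψ' x)) (fun x => c * (ψt'' x + τ * ψ'' x)) := by
      have h := IsH2.comb hH2t hH2 c (c * τ)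
      have e1 : (fun x => c * ψt x + c * τ * ψ x) = fun x => c * (ψt x + τ * ψ x) :=
        funext fun x => by ring
      have e2 : (fun x => c * ψt' x + c * τ * ψ' x) = fun x => c * (ψt' x + τ * ψ' x) :=
        funext fun x => by ring
      have e3 : (fun x => c * ψt'' x + c * τ * ψ'' x) = fun x => c * (ψt'' x + τ * ψ'' x) :=
        funext fun x => by ring
      rw [e1, e2, e3] at h
      exact h
    have mφ : MemLp (fun x => c * (ψt x + τ * ψ x)) 2 (volume : Measure ℝ) := hsH2.1.1
    have mφ' : MemLp (fun x => c * (ψt' x + τ * ψ' x)) 2 (volume : Measure ℝ) := hsH2.1.2.1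
    have mφ'' : MemLp (fun x => c * (ψt'' x + τ * ψ'' x)) 2 (volume : Measure ℝ) := hsH2.2.2.1
    have hmemA : MemA ξ1 ξ2 ρb ρ' (fun x => c * (ψt x + τ * ψ x)) (fun x => c * (ψt' x + τ * ψ' x)) (fun x => c * (ψt'' x + τ * ψ'' x)) := by
      refine ⟨hsH2, ?_, ?_, ?_, ?_⟩
      · exact ((L2mul mφ mφ).bdd_mul hρ'm (Filter.Eventually.of_forall hρ'bd)).congr
          (Filter.Eventually.of_forall fun x => by ring)
      · exact (intJ (ξ1 := ξ1) (ξ2 := ξ2) hρbm hρbbd mφ mφ' mφ mφ').congr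
          (Filter.Eventually.of_forall fun x => by ring)
      · have hq : MemLp (fun x => (ξ1 ^ 2 + ξ2 ^ 2) * (c * (ψt x + τ * ψ x)) + c * (ψt'' x + τ * ψ'' x)) 2
            (volume : Measure ℝ) := (mφ.const_mul _).add mφ''
        exact (L2mul hq hq).congr (Filter.Eventually.of_forall fun x => by ring)
      · rw [Jfun_smul]
        exact hc2
    have hle := hmin _ _ _ hmemA
    rw [hlam, Efun_smul] at hle
    have h6 : Jfun ξ1 ξ2 ρb (fun x => ψt x + τ * ψ x) (fun x => ψt' x + τ * ψ' x)
          * (c ^ 2 * Efun g μ s M ξ1 ξ2 ρ' (fun x => ψt x + τ * ψ x) (fun x => ψt' x + τ * ψ' x) (fun x => ψt'' x + τ * ψ'' x))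
        = Efun g μ s M ξ1 ξ2 ρ' (fun x => ψt x + τ * ψ x) (fun x => ψt' x + τ * ψ' x) (fun x => ψt'' x + τ * ψ'' x) := by
      have h7 : Jfun ξ1 ξ2 ρb (fun x => ψt x + τ * ψ x) (fun x => ψt' x + τ * ψ' x)
            * (c ^ 2 * Efun g μ s M ξ1 ξ2 ρ' (fun x => ψt x + τ * ψ x) (fun x => ψt' x + τ * ψ' x) (fun x => ψt'' x + τ * ψ'' x))
          = (c ^ 2 * Jfun ξ1 ξ2 ρb (fun x => ψt x + τ * ψ x) (fun x => ψt' x + τ * ψ' x))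
            * Efun g μ s M ξ1 ξ2 ρ' (fun x => ψt x + τ * ψ x) (fun x => ψt' x + τ * ψ' x) (fun x => ψt'' x + τ * ψ'' x) := by ring
      rw [h7, hc2, one_mul]
    have key : 0 ≤ Efun g μ s M ξ1 ξ2 ρ' (fun x => ψt x + τ * ψ x) (fun x => ψt' x + τ * ψ' x) (fun x => ψt'' x + τ * ψ'' x)
        + lam ^ 2 * Jfun ξ1 ξ2 ρb (fun x => ψt x + τ * ψ x) (fun x => ψt' x + τ * ψ' x) := by
      nlinarith [mul_le_mul_of_nonneg_left hle hjpos.le, h6]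
    rw [hf τ] at key
    exact key
  -- the linear coefficient vanishes
  have hBzero : B = 0 := by
    by_contra hB0
    obtain ⟨δ, hδdef⟩ : ∃ δ : ℝ, δ = 1 / (2 * |(∫ x, (ρb x * ((ξ1 ^ 2 + ξ2 ^ 2) * (ψt x * ψ x) + ψt' x * ψ' x)))| + |(∫ x, (ρb x * ((ξ1 ^ 2 + ξ2 ^ 2) * (ψ x * ψ x) + ψ' x * ψ' x)))| + 1) := ⟨_, rfl⟩
    have hδpos : 0 < δ := by rw [hδdef]; positivity
    have hδ1 : δ ≤ 1 := by
      rw [hδdef, div_le_one (by positivity)]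
      nlinarith [abs_nonneg (∫ x, (ρb x * ((ξ1 ^ 2 + ξ2 ^ 2) * (ψt x * ψ x) + ψt' x * ψ' x))), abs_nonneg (∫ x, (ρb x * ((ξ1 ^ 2 + ξ2 ^ 2) * (ψ x * ψ x) + ψ' x * ψ' x)))]
    have hδD : δ * (2 * |(∫ x, (ρb x * ((ξ1 ^ 2 + ξ2 ^ 2) * (ψt x * ψ x) + ψt' x * ψ' x)))| + |(∫ x, (ρb x * ((ξ1 ^ 2 + ξ2 ^ 2) * (ψ x * ψ x) + ψ' x * ψ' x)))|) < 1 := by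
      rw [hδdef, one_div_mul_eq_div, div_lt_one (by positivity)]
      linarith
    obtain ⟨ε, hεdef⟩ : ∃ ε : ℝ, ε = min δ (|B| / (|A2| + 1)) := ⟨_, rfl⟩
    have hBpos' : 0 < |B| := abs_pos.mpr hB0
    have hεpos : 0 < ε := by
      rw [hεdef]
      exact lt_min hδpos (div_pos hBpos' (by positivity))
    have hεδ : ε ≤ δ := by rw [hεdef]; exact min_le_left _ _
    have hεA : ε * (|A2| + 1) ≤ |B| := by
      have h := min_le_right δ (|B| / (|A2| + 1))
      rw [← hεdef] at h
      exact (le_div_iff₀ (by positivity)).mp h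
    have hJpos : ∀ τ : ℝ, |τ| ≤ δ → 0 < Jfun ξ1 ξ2 ρb (fun x => ψt x + τ * ψ x) (fun x => ψt' x + τ * ψ' x) := by
      intro τ hτ
      rw [hJx τ, hJT]
      have hτ1 : |τ| ≤ 1 := hτ.trans hδ1
      have a1 : |2 * τ * (∫ x, (ρb x * ((ξ1 ^ 2 + ξ2 ^ 2) * (ψt x * ψ x) + ψt' x * ψ' x))) + τ ^ 2 * (∫ x, (ρb x * ((ξ1 ^ 2 + ξ2 ^ 2) * (ψ x * ψ x) + ψ' x * ψ' x)))|
          ≤ |2 * τ * (∫ x, (ρb x * ((ξ1 ^ 2 + ξ2 ^ 2) * (ψt x * ψ x) + ψt' x * ψ' x)))| + |τ ^ 2 * (∫ x, (ρb x * ((ξ1 ^ 2 + ξ2 ^ 2) * (ψ x * ψ x) + ψ' x * ψ' x)))| := abs_add_le _ _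
      have a2 : |2 * τ * (∫ x, (ρb x * ((ξ1 ^ 2 + ξ2 ^ 2) * (ψt x * ψ x) + ψt' x * ψ' x)))| = 2 * |τ| * |(∫ x, (ρb x * ((ξ1 ^ 2 + ξ2 ^ 2) * (ψt x * ψ x) + ψt' x * ψ' x)))| := by
        rw [abs_mul, abs_mul, abs_two]
      have a3 : |τ ^ 2 * (∫ x, (ρb x * ((ξ1 ^ 2 + ξ2 ^ 2) * (ψ x * ψ x) + ψ' x * ψ' x)))| = τ ^ 2 * |(∫ x, (ρb x * ((ξ1 ^ 2 + ξ2 ^ 2) * (ψ x * ψ x) + ψ' x * ψ' x)))| := by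
        rw [abs_mul, abs_pow, sq_abs]
      have h1 : |2 * τ * (∫ x, (ρb x * ((ξ1 ^ 2 + ξ2 ^ 2) * (ψt x * ψ x) + ψt' x * ψ' x))) + τ ^ 2 * (∫ x, (ρb x * ((ξ1 ^ 2 + ξ2 ^ 2) * (ψ x * ψ x) + ψ' x * ψ' x)))| ≤ |τ| * (2 * |(∫ x, (ρb x * ((ξ1 ^ 2 + ξ2 ^ 2) * (ψt x * ψ x) + ψt' x * ψ' x)))| + |(∫ x, (ρb x * ((ξ1 ^ 2 + ξ2 ^ 2) * (ψ x * ψ x) + ψ' x * ψ' x)))|) := by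
        rw [a2, a3] at a1
        nlinarith [abs_nonneg τ, abs_nonneg (∫ x, (ρb x * ((ξ1 ^ 2 + ξ2 ^ 2) * (ψ x * ψ x) + ψ' x * ψ' x))), sq_abs τ,
          mul_nonneg (abs_nonneg τ) (abs_nonneg (∫ x, (ρb x * ((ξ1 ^ 2 + ξ2 ^ 2) * (ψ x * ψ x) + ψ' x * ψ' x))))]
      have h2 : -(2 * τ * (∫ x, (ρb x * ((ξ1 ^ 2 + ξ2 ^ 2) * (ψt x * ψ x) + ψt' x * ψ' x))) + τ ^ 2 * (∫ x, (ρb x * ((ξ1 ^ 2 + ξ2 ^ 2) * (ψ x * ψ x) + ψ' x * ψ' x)))) ≤ |τ| * (2 * |(∫ x, (ρb x * ((ξ1 ^ 2 + ξ2 ^ 2) * (ψt x * ψ x) + ψt' x * ψ' x)))| + |(∫ x, (ρb x * ((ξ1 ^ 2 + ξ2 ^ 2) * (ψ x * ψ x) + ψ' x * ψ' x)))|) :=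
        (neg_le_abs _).trans h1
      have h3 : |τ| * (2 * |(∫ x, (ρb x * ((ξ1 ^ 2 + ξ2 ^ 2) * (ψt x * ψ x) + ψt' x * ψ' x)))| + |(∫ x, (ρb x * ((ξ1 ^ 2 + ξ2 ^ 2) * (ψ x * ψ x) + ψ' x * ψ' x)))|) ≤ δ * (2 * |(∫ x, (ρb x * ((ξ1 ^ 2 + ξ2 ^ 2) * (ψt x * ψ x) + ψt' x * ψ' x)))| + |(∫ x, (ρb x * ((ξ1 ^ 2 + ξ2 ^ 2) * (ψ x * ψ x) + ψ' x * ψ' x)))|) :=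
        mul_le_mul_of_nonneg_right hτ (by positivity)
      linarith
    have hp1 := hge ε (hJpos ε (by rw [abs_of_pos hεpos]; exact hεδ))
    have hp2 := hge (-ε) (hJpos (-ε) (by rw [abs_neg, abs_of_pos hεpos]; exact hεδ))
    have h7 : ε ^ 2 * A2 ≤ ε ^ 2 * |A2| :=
      mul_le_mul_of_nonneg_left (le_abs_self A2) (sq_nonneg ε)
    have h6 : ε * (ε * (|A2| + 1)) ≤ ε * |B| := mul_le_mul_of_nonneg_left hεA hεpos.le
    rcases abs_cases B with ⟨hB1, hB2⟩ | ⟨hB1, hB2⟩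
    · have hBgt : 0 < B := lt_of_le_of_ne hB2 (Ne.symm hB0)
      rw [hB1] at h6
      nlinarith [hp2, h7, h6, mul_pos hεpos hBgt, sq_nonneg ε]
    · rw [hB1] at h6
      nlinarith [hp1, h7, h6, mul_neg_of_pos_of_neg hεpos hB2, sq_nonneg ε]
  -- translate into the desired identity
  have e1c : (∫ x, (4 * (ξ1 ^ 2 + ξ2 ^ 2) * (ψt' x * ψ' x) + ((ξ1 ^ 2 + ξ2 ^ 2) * ψt x + ψt'' x) * ((ξ1 ^ 2 + ξ2 ^ 2) * ψ x + ψ'' x))) = ∫ x, (4 * (ξ1 ^ 2 + ξ2 ^ 2) * ψt' x * ψ' x +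
      ((ξ1 ^ 2 + ξ2 ^ 2) * ψt x + ψt'' x) * ((ξ1 ^ 2 + ξ2 ^ 2) * ψ x + ψ'' x)) :=
    integral_congr_ae (Filter.Eventually.of_forall fun x => by ring)
  have eJc : (∫ x, (ρb x * ((ξ1 ^ 2 + ξ2 ^ 2) * (ψt x * ψ x) + ψt' x * ψ' x))) = ∫ x, ρb x * ((ξ1 ^ 2 + ξ2 ^ 2) * ψt x * ψ x + ψt' x * ψ' x) :=
    integral_congr_ae (Filter.Eventually.of_forall fun x => by ring)
  have e0c : (ξ1 ^ 2 + ξ2 ^ 2) * (∫ x, (M ^ 2 * ξ1 ^ 2 * (ψt x * ψ x + ψt' x * ψ' x / (ξ1 ^ 2 + ξ2 ^ 2)) - g * ρ' x * (ψt x * ψ x)))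
      = (M * ξ1) ^ 2 * (∫ x, ((ξ1 ^ 2 + ξ2 ^ 2) * ψt x * ψ x + ψt' x * ψ' x))
        - g * (ξ1 ^ 2 + ξ2 ^ 2) * (∫ x, ρ' x * ψt x * ψ x) := by
    have iMix : Integrable (fun x => (ξ1 ^ 2 + ξ2 ^ 2) * ψt x * ψ x + ψt' x * ψ' x) (volume : Measure ℝ) :=
      (((L2mul ht2 hs2).const_mul (ξ1 ^ 2 + ξ2 ^ 2)).add (L2mul ht'2 hs'2)).congr
        (Filter.Eventually.of_forall fun x => by simp only [Pi.add_apply]; ring)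
    have iRho : Integrable (fun x => ρ' x * ψt x * ψ x) (volume : Measure ℝ) :=
      ((L2mul ht2 hs2).bdd_mul hρ'm (Filter.Eventually.of_forall hρ'bd)).congr (Filter.Eventually.of_forall fun x => by ring)
    have estep : (∫ x, (ξ1 ^ 2 + ξ2 ^ 2) * (M ^ 2 * ξ1 ^ 2 * (ψt x * ψ x + ψt' x * ψ' x / (ξ1 ^ 2 + ξ2 ^ 2)) - g * ρ' x * (ψt x * ψ x)))
        = ∫ x, ((M * ξ1) ^ 2 * ((ξ1 ^ 2 + ξ2 ^ 2) * ψt x * ψ x + ψt' x * ψ' x)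
          - g * (ξ1 ^ 2 + ξ2 ^ 2) * (ρ' x * ψt x * ψ x)) :=
      integral_congr_ae (Filter.Eventually.of_forall fun x => by field_simp)
    rw [← integral_const_mul, estep,
      integral_sub (iMix.const_mul ((M * ξ1) ^ 2)) (iRho.const_mul (g * (ξ1 ^ 2 + ξ2 ^ 2))),
      integral_const_mul, integral_const_mul]
  rw [hBdef] at hBzero
  linear_combination hBzero - s * μ * e1c - lam ^ 2 * eJc - e0c
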